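/- Let ψ be a Hochschild 2n-cocycle of an algebra B with values in B^* (with the convention ψ(a_0,...,a_p) = 0 for p ≠ 2n). For a commutative DG algebra Ω (de Rham forms) and the DGA A = Ω ⊗ B with differential d ⊗ 1, the evaluation map sending (ω_0 a_0, ..., ω_p a_p) to ψ(a_0,...,a_p) ω_0 ∧ ω_1 ∧ ⋯ ∧ ω_p defines a map of complexes from the (product-completed) Hochschild chain complex C^Π_•(A) to Ω^{2n−•} with differential (−1)^p d on Ω^{2n−p}. -/

import Mathlib

/- STATEMENT 15: Let ψ be a Hochschild 2n-cocycle of B with values in B^* (vanishing in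
other degrees), Ω a graded-commutative DGA and A = Ω ⊗ B with differential d ⊗ 1.  The
evaluation map (ω_0a_0,…,ω_pa_p) ↦ ψ(a_0,…,a_p)·ω_0∧⋯∧ω_p is a map of complexes
C^Π_•(A) → Ω^{2n−•} (with differential (−1)^p d on Ω^{2n−p}).  We state the chain map
property on the (homogeneous) generators ω_0a_0 ⊗ ⋯ ⊗ ω_{q+1}a_{q+1}: the evaluation of
the Hochschild boundary equals (−1)^{q+1} d of the evaluation. -/

noncomputable section

open scoped BigOperators DirectSum

/-- Evaluation of the cochain family `Ψ` on a generator `(ω_0a_0,…,ω_ka_k)`: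
`Ψ_k(a)·ω_0⋯ω_k`. -/
def evalChain {Ω B : Type*} [Ring Ω] [Algebra ℂ Ω] [Ring B]
    (Ψ : (k : ℕ) → (Fin (k + 1) → B) → ℂ) (k : ℕ)
    (w : Fin (k + 1) → Ω) (a : Fin (k + 1) → B) : Ω :=
  Ψ k a • (List.ofFn w).prod

/-- A product of homogeneous elements is homogeneous of the total degree. -/
lemma aux_prod_mem {Ω : Type*} [Ring Ω] [Algebra ℂ Ω] (𝒜 : ℕ → Submodule ℂ Ω)
    [GradedAlgebra 𝒜] :
    ∀ (m : ℕ) (e : Fin m → ℕ) (w : Fin m → Ω), (∀ j, w j ∈ 𝒜 (e j)) →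
      (List.ofFn w).prod ∈ 𝒜 (∑ j, e j) := by
  intro m
  induction m with
  | zero => intro e w _; simpa using SetLike.one_mem_graded 𝒜
  | succ m ih =>
    intro e w hw
    rw [List.ofFn_succ, List.prod_cons, Fin.sum_univ_succ]
    exact SetLike.mul_mem_graded (hw 0)
      (ih (fun j => e j.succ) (fun j => w j.succ) (fun j => hw j.succ))

lemma aux_filter_zero (m : ℕ) (e : Fin (m + 1) → ℕ) :
    ∑ j ∈ Finset.univ.filter (fun j : Fin (m + 1) => j < 0), e j = 0 := by
  simp

lemma aux_filter_succ (m : ℕ) (e : Fin (m + 1) → ℕ) (k : Fin m) :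
    ∑ j ∈ Finset.univ.filter (fun j : Fin (m + 1) => j < k.succ), e j
      = e 0 + ∑ j ∈ Finset.univ.filter (fun j : Fin m => j < k), e j.succ := by
  rw [Finset.sum_filter, Finset.sum_filter, Fin.sum_univ_succ]
  simp [Fin.succ_lt_succ_iff, Fin.succ_pos]

/-- Graded Leibniz rule for a product of homogeneous elements. -/
lemma aux_leib {Ω : Type*} [Ring Ω] [Algebra ℂ Ω] (𝒜 : ℕ → Submodule ℂ Ω)
    [GradedAlgebra 𝒜] (dΩ : Ω →ₗ[ℂ] Ω)
    (hLeib : ∀ (i : ℕ) (w v : Ω), w ∈ 𝒜 i →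
      dΩ (w * v) = dΩ w * v + ((-1 : ℂ) ^ i) • (w * dΩ v)) :
    ∀ (m : ℕ) (e : Fin m → ℕ) (w : Fin m → Ω), (∀ j, w j ∈ 𝒜 (e j)) →
      dΩ (List.ofFn w).prod
        = ∑ i : Fin m, ((-1 : ℂ) ^ (∑ j ∈ Finset.univ.filter (fun j => j < i), e j)) •
            (List.ofFn (Function.update w i (dΩ (w i)))).prod := by
  have hd1 : dΩ (1 : Ω) = 0 := by
    simpa using hLeib 0 1 1 (SetLike.one_mem_graded 𝒜)
  intro m
  induction m with
  | zero => intro e w _; simp [hd1]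
  | succ m ih =>
    intro e w hw
    have hR := ih (fun j => e j.succ) (fun j => w j.succ) (fun j => hw j.succ)
    rw [List.ofFn_succ, List.prod_cons, hLeib (e 0) _ _ (hw 0), hR, Fin.sum_univ_succ]
    congr 1
    · rw [aux_filter_zero, pow_zero, one_smul, List.ofFn_succ, List.prod_cons,
        Function.update_self]
      have hs : (fun i : Fin m => Function.update w 0 (dΩ (w 0)) i.succ)
          = fun i => w i.succ :=
        funext fun j => Function.update_of_ne (Fin.succ_ne_zero j) _ _
      rw [hs]
    · rw [Finset.mul_sum, Finset.smul_sum]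
      refine Finset.sum_congr rfl fun k _ => ?_
      rw [aux_filter_succ]
      have h0 : Function.update w k.succ (dΩ (w k.succ)) 0 = w 0 :=
        Function.update_of_ne (Fin.succ_ne_zero k).symm _ _
      have hs : (fun j : Fin m => Function.update w k.succ (dΩ (w k.succ)) j.succ)
          = Function.update (fun j : Fin m => w j.succ) k (dΩ (w k.succ)) := by
        funext j
        rcases eq_or_ne j k with rfl | hjk
        · rw [Function.update_self, Function.update_self]
        · rw [Function.update_of_ne (fun h => hjk (Fin.succ_injective _ h)) _ _,
            Function.update_of_ne hjk]
      rw [List.ofFn_succ, h0, hs, List.prod_cons, mul_smul_comm, smul_smul, ← pow_add]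

/-- Contracting two adjacent factors does not change the product. -/
lemma aux_contract {Ω : Type*} [Ring Ω] :
    ∀ (m : ℕ) (w : Fin (m + 2) → Ω) (i : Fin (m + 1)),
      (List.ofFn (fun j : Fin (m + 1) =>
        if (j : ℕ) < (i : ℕ) then w ⟨(j : ℕ), (by have := j.isLt; omega : (j : ℕ) < m + 1 + 1)⟩
        else if (j : ℕ) = (i : ℕ) then w i.castSucc * w i.succ
        else w ⟨(j : ℕ) + 1, (by have := j.isLt; omega : (j : ℕ) + 1 < m + 1 + 1)⟩)).prod
      = (List.ofFn w).prod := by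
  intro m
  induction m with
  | zero =>
    intro w i
    have hi : i = 0 := Fin.fin_one_eq_zero i
    subst hi
    simp [List.ofFn_succ]
  | succ m ih =>
    intro w i
    rcases Fin.eq_zero_or_eq_succ i with rfl | ⟨k, rfl⟩
    · have key : (fun j : Fin (m + 2) =>
          if (j : ℕ) < (((0 : Fin (m + 2))) : ℕ) then w ⟨(j : ℕ), by have := j.isLt; omega⟩
          else if (j : ℕ) = (((0 : Fin (m + 2))) : ℕ) then
            w (0 : Fin (m + 2)).castSucc * w (0 : Fin (m + 2)).succ
          else w ⟨(j : ℕ) + 1, by have := j.isLt; omega⟩)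
          = Fin.cons (w (0 : Fin (m + 2)).castSucc * w (0 : Fin (m + 2)).succ)
              (fun j : Fin (m + 1) => w j.succ.succ) := by
        funext j
        rcases Fin.eq_zero_or_eq_succ j with rfl | ⟨t, rfl⟩
        · simp
        · rw [Fin.cons_succ, if_neg (by simp), if_neg (by simp)]
          exact congrArg w (Fin.ext (by simp))
      rw [key]
      simp only [List.ofFn_succ, List.prod_cons, Fin.cons_zero, Fin.cons_succ]
      rw [Fin.castSucc_zero, mul_assoc]
    · have key : (fun j : Fin (m + 2) =>
          if (j : ℕ) < ((k.succ : Fin (m + 2)) : ℕ) then w ⟨(j : ℕ), by have := j.isLt; omega⟩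
          else if (j : ℕ) = ((k.succ : Fin (m + 2)) : ℕ) then
            w k.succ.castSucc * w k.succ.succ
          else w ⟨(j : ℕ) + 1, by have := j.isLt; omega⟩)
          = Fin.cons (w 0) (fun j : Fin (m + 1) =>
              if (j : ℕ) < (k : ℕ) then
                (fun t : Fin (m + 2) => w t.succ) ⟨(j : ℕ), by have := j.isLt; omega⟩
              else if (j : ℕ) = (k : ℕ) then
                (fun t : Fin (m + 2) => w t.succ) k.castSucc *
                  (fun t : Fin (m + 2) => w t.succ) k.succ
              else (fun t : Fin (m + 2) => w t.succ) ⟨(j : ℕ) + 1, by have := j.isLt; omega⟩) := by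
        funext j
        rcases Fin.eq_zero_or_eq_succ j with rfl | ⟨t, rfl⟩
        · rw [Fin.cons_zero, if_pos (by simp)]
          exact congrArg w (Fin.ext (by simp))
        · rw [Fin.cons_succ]
          by_cases h1 : (t : ℕ) < (k : ℕ)
          · rw [if_pos (by simpa using h1), if_pos h1]
            exact congrArg w (Fin.ext (by simp))
          · by_cases h2 : (t : ℕ) = (k : ℕ)
            · rw [if_neg (by simp; omega), if_pos (by simpa using h2), if_neg h1, if_pos h2]
              exact congrArg₂ (· * ·) (congrArg w (Fin.ext (by simp)))
                (congrArg w (Fin.ext (by simp)))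
            · rw [if_neg (by simp; omega), if_neg (by simp; omega), if_neg h1, if_neg h2]
              exact congrArg w (Fin.ext (by simp))
      rw [key]
      rw [show (List.ofFn w).prod
            = w 0 * (List.ofFn (fun t : Fin (m + 2) => w t.succ)).prod by
          rw [List.ofFn_succ, List.prod_cons]]
      rw [← ih (fun t : Fin (m + 2) => w t.succ) k]
      simp only [List.ofFn_succ, List.prod_cons, Fin.cons_zero, Fin.cons_succ]

/-- Rotating the last factor to the front. -/
lemma aux_rotate {Ω : Type*} [Ring Ω] (m : ℕ) (w : Fin (m + 2) → Ω) :
    (List.ofFn (fun j : Fin (m + 1) =>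
      if (j : ℕ) = 0 then w (Fin.last (m + 1)) * w 0
      else w ⟨(j : ℕ), (by have := j.isLt; omega : (j : ℕ) < m + 1 + 1)⟩)).prod
    = w (Fin.last (m + 1)) * (List.ofFn (fun j : Fin (m + 1) => w j.castSucc)).prod := by
  have key : (fun j : Fin (m + 1) =>
      if (j : ℕ) = 0 then w (Fin.last (m + 1)) * w 0
      else w ⟨(j : ℕ), by have := j.isLt; omega⟩)
      = Fin.cons (w (Fin.last (m + 1)) * w 0)
          (fun j : Fin m => w j.succ.castSucc) := by
    funext j
    rcases Fin.eq_zero_or_eq_succ j with rfl | ⟨t, rfl⟩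
    · simp
    · rw [Fin.cons_succ, if_neg (by simp)]
      exact congrArg w (Fin.ext (by simp))
  rw [key]
  simp only [List.ofFn_succ, List.prod_cons, Fin.cons_zero, Fin.cons_succ, Fin.castSucc_zero,
    mul_assoc]

theorem statement15
    (Ω : Type*) [Ring Ω] [Algebra ℂ Ω] (𝒜 : ℕ → Submodule ℂ Ω) [GradedAlgebra 𝒜]
    -- Ω is graded-commutative
    (hgc : ∀ (i j : ℕ) (w v : Ω), w ∈ 𝒜 i → v ∈ 𝒜 j →
      w * v = ((-1 : ℂ) ^ (i * j)) • (v * w))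
    -- the de Rham differential of Ω
    (dΩ : Ω →ₗ[ℂ] Ω)
    (hdsq : ∀ w, dΩ (dΩ w) = 0)
    (hdgr : ∀ (i : ℕ) (w : Ω), w ∈ 𝒜 i → dΩ w ∈ 𝒜 (i + 1))
    (hLeib : ∀ (i : ℕ) (w v : Ω), w ∈ 𝒜 i →
      dΩ (w * v) = dΩ w * v + ((-1 : ℂ) ^ i) • (w * dΩ v))
    (B : Type*) [Ring B] [Algebra ℂ B] (n : ℕ)
    -- the Hochschild cocycle ψ = Ψ (2n), with the convention Ψ k = 0 for k ≠ 2n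
    (Ψ : (k : ℕ) → (Fin (k + 1) → B) → ℂ)
    (hvan : ∀ k, k ≠ 2 * n → ∀ a, Ψ k a = 0)
    (hcoc : ∀ (b : Fin (2 * n + 2) → B),
      (∑ i : Fin (2 * n + 1), (-1 : ℂ) ^ (i : ℕ) *
        Ψ (2 * n) (fun j =>
          if (j : ℕ) < (i : ℕ) then b ⟨(j : ℕ), by have := j.isLt; omega⟩
          else if (j : ℕ) = (i : ℕ) then
            b ⟨(i : ℕ), by have := i.isLt; omega⟩ *
              b ⟨(i : ℕ) + 1, by have := i.isLt; omega⟩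
          else b ⟨(j : ℕ) + 1, by have := j.isLt; omega⟩)) +
      (-1 : ℂ) ^ (2 * n + 1) *
        Ψ (2 * n) (fun j =>
          if (j : ℕ) = 0 then b (Fin.last (2 * n + 1)) * b 0
          else b ⟨(j : ℕ), by have := j.isLt; omega⟩) = 0) :
    -- the chain map property on a homogeneous generator (ω_0a_0,…,ω_{q+1}a_{q+1}):
    ∀ (q : ℕ) (e : Fin (q + 2) → ℕ) (w : Fin (q + 2) → Ω)
      (_ : ∀ j, w j ∈ 𝒜 (e j)) (a : Fin (q + 2) → B),
      -- evaluation of the Hochschild boundary of the generator …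
      ((∑ i : Fin (q + 1), (-1 : ℂ) ^ (i : ℕ) •
          evalChain Ψ q
            (fun j => if (j : ℕ) < (i : ℕ) then w ⟨(j : ℕ), by have := j.isLt; omega⟩
              else if (j : ℕ) = (i : ℕ) then w i.castSucc * w i.succ
              else w ⟨(j : ℕ) + 1, by have := j.isLt; omega⟩)
            (fun j => if (j : ℕ) < (i : ℕ) then a ⟨(j : ℕ), by have := j.isLt; omega⟩
              else if (j : ℕ) = (i : ℕ) then a i.castSucc * a i.succ
              else a ⟨(j : ℕ) + 1, by have := j.isLt; omega⟩)) +
        ((-1 : ℂ) ^ ((q + 1) +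
            (e (Fin.last (q + 1))) * (∑ j : Fin (q + 1), e j.castSucc))) •
          evalChain Ψ q
            (fun j => if (j : ℕ) = 0 then w (Fin.last (q + 1)) * w 0
              else w ⟨(j : ℕ), by have := j.isLt; omega⟩)
            (fun j => if (j : ℕ) = 0 then a (Fin.last (q + 1)) * a 0
              else a ⟨(j : ℕ), by have := j.isLt; omega⟩) +
        ∑ i : Fin (q + 2),
          ((-1 : ℂ) ^ ((q + 1) +
              ∑ j ∈ Finset.univ.filter (fun j : Fin (q + 2) => j < i), e j)) •
            evalChain Ψ (q + 1) (Function.update w i (dΩ (w i))) a)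
      -- … equals `(−1)^{q+1} d` of the evaluation of the generator
      = (-1 : ℂ) ^ (q + 1) • dΩ (evalChain Ψ (q + 1) w a) := by
  intro q e w hw a
  -- Step 1: the `update` part of the boundary is `(−1)^{q+1} d` of the evaluation.
  have h3 : (∑ i : Fin (q + 2),
        ((-1 : ℂ) ^ ((q + 1) +
            ∑ j ∈ Finset.univ.filter (fun j : Fin (q + 2) => j < i), e j)) •
          evalChain Ψ (q + 1) (Function.update w i (dΩ (w i))) a)
      = (-1 : ℂ) ^ (q + 1) • dΩ (evalChain Ψ (q + 1) w a) := by
    simp only [evalChain]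
    rw [map_smul, aux_leib 𝒜 dΩ hLeib (q + 2) e w hw, Finset.smul_sum, Finset.smul_sum]
    refine Finset.sum_congr rfl fun i _ => ?_
    simp only [smul_smul]
    congr 1
    rw [pow_add]
    ring
  rw [← h3, add_eq_right]
  -- Step 2: the remaining part vanishes (by the cocycle identity if `q = 2n`,
  -- trivially otherwise).
  by_cases hq : q = 2 * n
  · subst hq
    simp only [evalChain]
    have hWi := fun i : Fin (2 * n + 1) => aux_contract (2 * n) w i
    simp only [hWi]
    rw [aux_rotate (2 * n) w]
    have hmem : (List.ofFn (fun j : Fin (2 * n + 1) => w j.castSucc)).prod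
        ∈ 𝒜 (∑ j : Fin (2 * n + 1), e j.castSucc) :=
      aux_prod_mem 𝒜 (2 * n + 1) (fun j => e j.castSucc) (fun j => w j.castSucc)
        (fun j => hw j.castSucc)
    rw [hgc _ _ _ _ (hw (Fin.last (2 * n + 1))) hmem]
    have hconcat : (List.ofFn (fun j : Fin (2 * n + 1) => w j.castSucc)).prod *
        w (Fin.last (2 * n + 1)) = (List.ofFn w).prod := by
      rw [List.ofFn_succ' w, List.prod_concat]
    rw [hconcat]
    simp only [smul_smul]
    rw [← Finset.sum_smul, ← add_smul]
    convert zero_smul ℂ ((List.ofFn w).prod) using 2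
    have hsq : (-1 : ℂ) ^ ((e (Fin.last (2 * n + 1))) *
          (∑ j : Fin (2 * n + 1), e j.castSucc)) *
        (-1 : ℂ) ^ ((e (Fin.last (2 * n + 1))) *
          (∑ j : Fin (2 * n + 1), e j.castSucc)) = 1 := by
      rw [← pow_add, ← two_mul, pow_mul]
      norm_num
    have hAi : ∀ i : Fin (2 * n + 1),
        (fun j : Fin (2 * n + 1) =>
          if (j : ℕ) < (i : ℕ) then a ⟨(j : ℕ), by have := j.isLt; omega⟩
          else if (j : ℕ) = (i : ℕ) then a i.castSucc * a i.succ
          else a ⟨(j : ℕ) + 1, by have := j.isLt; omega⟩)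
        = (fun j : Fin (2 * n + 1) =>
          if (j : ℕ) < (i : ℕ) then a ⟨(j : ℕ), by have := j.isLt; omega⟩
          else if (j : ℕ) = (i : ℕ) then
            a ⟨(i : ℕ), by have := i.isLt; omega⟩ *
              a ⟨(i : ℕ) + 1, by have := i.isLt; omega⟩
          else a ⟨(j : ℕ) + 1, by have := j.isLt; omega⟩) := by
      intro i
      funext j
      split_ifs <;> rfl
    simp only [hAi]
    calc (∑ i : Fin (2 * n + 1), (-1 : ℂ) ^ (i : ℕ) *
            Ψ (2 * n) (fun j =>
              if (j : ℕ) < (i : ℕ) then a ⟨(j : ℕ), by have := j.isLt; omega⟩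
              else if (j : ℕ) = (i : ℕ) then
                a ⟨(i : ℕ), by have := i.isLt; omega⟩ *
                  a ⟨(i : ℕ) + 1, by have := i.isLt; omega⟩
              else a ⟨(j : ℕ) + 1, by have := j.isLt; omega⟩)) +
          (-1 : ℂ) ^ ((2 * n + 1) +
              (e (Fin.last (2 * n + 1))) * (∑ j : Fin (2 * n + 1), e j.castSucc)) *
            (Ψ (2 * n) (fun j =>
              if (j : ℕ) = 0 then a (Fin.last (2 * n + 1)) * a 0
              else a ⟨(j : ℕ), by have := j.isLt; omega⟩) *
              (-1 : ℂ) ^ ((e (Fin.last (2 * n + 1))) *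
                (∑ j : Fin (2 * n + 1), e j.castSucc)))
        = (∑ i : Fin (2 * n + 1), (-1 : ℂ) ^ (i : ℕ) *
            Ψ (2 * n) (fun j =>
              if (j : ℕ) < (i : ℕ) then a ⟨(j : ℕ), by have := j.isLt; omega⟩
              else if (j : ℕ) = (i : ℕ) then
                a ⟨(i : ℕ), by have := i.isLt; omega⟩ *
                  a ⟨(i : ℕ) + 1, by have := i.isLt; omega⟩
              else a ⟨(j : ℕ) + 1, by have := j.isLt; omega⟩)) +
          (-1 : ℂ) ^ (2 * n + 1) *
            Ψ (2 * n) (fun j =>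
              if (j : ℕ) = 0 then a (Fin.last (2 * n + 1)) * a 0
              else a ⟨(j : ℕ), by have := j.isLt; omega⟩) := by
          congr 1
          rw [pow_add]
          calc _ = ((-1 : ℂ) ^ ((e (Fin.last (2 * n + 1))) *
                (∑ j : Fin (2 * n + 1), e j.castSucc)) *
              (-1 : ℂ) ^ ((e (Fin.last (2 * n + 1))) *
                (∑ j : Fin (2 * n + 1), e j.castSucc))) *
              ((-1 : ℂ) ^ (2 * n + 1) * Ψ (2 * n) (fun j =>
                if (j : ℕ) = 0 then a (Fin.last (2 * n + 1)) * a 0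
                else a ⟨(j : ℕ), by have := j.isLt; omega⟩)) := by ring
          _ = _ := by rw [hsq, one_mul]
      _ = 0 := hcoc a
  · simp only [evalChain, hvan q hq, zero_smul, smul_zero, Finset.sum_const_zero, add_zero,
      zero_add]

end
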